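/- Let c = (c_1 ≥ … ≥ c_N) be a non-increasing integer sequence, 0 ≤ x, and d defined by d_i = c_{i+x}. Fix 1 ≤ j ≤ x and let ĥ_j = min{ i : d_{i−j+1} < c_i } (conventions: d_i = +∞ for i < 1, d_{N−x+1} = −∞). Then j ≤ ĥ_j ≤ N − x + j, and c_{i+x−j+1} = c_i for all j ≤ i ≤ ĥ_j − 1. -/
import Mathlib

lemma anti_of_step (N : ℕ) (c : ℕ → ℤ)
    (hcmono : ∀ i, 1 ≤ i → i < N → c (i + 1) ≤ c i) :
    ∀ a b, 1 ≤ a → a ≤ b → b ≤ N → c b ≤ c a := by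
  intro a b ha hab hbN
  induction b, hab using Nat.le_induction with
  | base => exact le_rfl
  | succ n hn ih =>
    exact le_trans (hcmono n (le_trans ha hn) (by omega)) (ih (by omega))

/-- For a non-increasing sequence `c` of length `N`, truncation `d_i = c_{i+x}`,
and `ĥ_j = min{i : d_{i−j+1} < c_i}` (with `d_i = +∞` for `i < 1`,
`d_{N−x+1} = −∞`), one has `j ≤ ĥ_j ≤ N − x + j` and `c_{i+x−j+1} = c_i`
for `j ≤ i ≤ ĥ_j − 1`. -/
theorem stmt18 (N x : ℕ) (hx : x ≤ N) (c : ℕ → ℤ)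
    (hcmono : ∀ i, 1 ≤ i → i < N → c (i + 1) ≤ c i)
    (j : ℕ) (hj1 : 1 ≤ j) (hjx : j ≤ x) :
    let h : ℕ := sInf {i : ℕ | j ≤ i ∧ (N - x < i - j + 1 ∨ c (i - j + 1 + x) < c i)}
    j ≤ h ∧ h ≤ N - x + j ∧ ∀ i, j ≤ i → i + 1 ≤ h → c (i + x + 1 - j) = c i := by
  intro h
  have hmem : (N - x + j) ∈ {i : ℕ | j ≤ i ∧ (N - x < i - j + 1 ∨ c (i - j + 1 + x) < c i)} := by
    constructor
    · omega
    · left; omega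
  have hne : {i : ℕ | j ≤ i ∧ (N - x < i - j + 1 ∨ c (i - j + 1 + x) < c i)}.Nonempty :=
    ⟨_, hmem⟩
  have hh_mem := Nat.sInf_mem hne
  refine ⟨hh_mem.1, Nat.sInf_le hmem, ?_⟩
  intro i hji hih
  have hnot : i ∉ {i : ℕ | j ≤ i ∧ (N - x < i - j + 1 ∨ c (i - j + 1 + x) < c i)} :=
    Nat.notMem_of_lt_sInf (by omega)
  simp only [Set.mem_setOf_eq, not_and, not_or, not_lt] at hnot
  obtain ⟨h1, h2⟩ := hnot hji
  have heq : i + x + 1 - j = i - j + 1 + x := by omega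
  rw [heq]
  have hle : c (i - j + 1 + x) ≤ c i :=
    anti_of_step N c hcmono i (i - j + 1 + x) (by omega) (by omega) (by omega)
  omega
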